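/- arXiv:2111.10807 — 2 statements merged into one kernel-verified Lean document; each statement's English description precedes it below -/
import Mathlib

section
/- For every irrational x in (0,1), the series ∑_{j≥1} β_{j-1}(x)·a_j(x) converges, where a_j(x) are the continued fraction partial quotients of x and β_j(x) = ∏_{i=0}^{j} G^i(x) with G the Gauss map G(y)=1/y−⌊1/y⌋ and β_{-1}(x)=1. -/
open Filter Topology Finset

/-- Gauss map `G(y) = 1/y - ⌊1/y⌋`. -/
noncomputable def gauss (x : ℝ) : ℝ := Int.fract x⁻¹

/-- `pa x j` is the `j`-th continued fraction partial quotient `a_j(x) = ⌊1/G^{j-1}(x)⌋` (for `j ≥ 1`). -/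
noncomputable def pa (x : ℝ) (j : ℕ) : ℤ := ⌊(gauss^[j-1] x)⁻¹⌋

/-- `beta x j = β_j(x) = ∏_{i=0}^{j} G^i(x)`. -/
noncomputable def beta (x : ℝ) (j : ℕ) : ℝ := ∏ i ∈ Finset.range (j+1), gauss^[i] x

/-- Convergent denominators: `q_0 = 1`, `q_1 = a_1`, `q_j = a_j q_{j-1} + q_{j-2}`. -/
noncomputable def q (x : ℝ) : ℕ → ℤ
  | 0 => 1
  | 1 => pa x 1
  | (n+2) => pa x (n+2) * q x (n+1) + q x n

lemma gauss_step (y : ℝ) (hy : y ∈ Set.Ioo (0:ℝ) 1) (h : Irrational y) :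
    gauss y ∈ Set.Ioo (0:ℝ) 1 ∧ Irrational (gauss y) := by
  have hinv : Irrational y⁻¹ := h.inv
  have hfr : Irrational (Int.fract y⁻¹) := by
    rw [Int.fract]
    exact hinv.sub_intCast _
  refine ⟨⟨?_, ?_⟩, hfr⟩
  · rcases lt_or_eq_of_le (Int.fract_nonneg y⁻¹) with h' | h'
    · exact h'
    · exact absurd (by rw [← h']; exact Rat.not_irrational 0 ∘ (by simpa using ·)) (not_not.mpr hfr)
  · exact Int.fract_lt_one _

lemma iter_mem (x : ℝ) (hx : x ∈ Set.Ioo (0:ℝ) 1) (hirr : Irrational x) (n : ℕ) :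
    gauss^[n] x ∈ Set.Ioo (0:ℝ) 1 ∧ Irrational (gauss^[n] x) := by
  induction n with
  | zero => exact ⟨hx, hirr⟩
  | succ n ih =>
    rw [Function.iterate_succ_apply']
    exact gauss_step _ ih.1 ih.2

lemma floor_inv_pos (y : ℝ) (hy : y ∈ Set.Ioo (0:ℝ) 1) : 1 ≤ ⌊y⁻¹⌋ := by
  rw [Int.le_floor]
  push_cast
  rw [le_inv_comm₀ one_pos hy.1]
  simpa using hy.2.le

/-- `y * ⌊1/y⌋ ≤ 1` -/
lemma mul_floor_le (y : ℝ) (hy : y ∈ Set.Ioo (0:ℝ) 1) : y * (⌊y⁻¹⌋ : ℝ) ≤ 1 := by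
  have h1 : (⌊y⁻¹⌋ : ℝ) ≤ y⁻¹ := Int.floor_le _
  calc y * (⌊y⁻¹⌋ : ℝ) ≤ y * y⁻¹ := by
        exact mul_le_mul_of_nonneg_left h1 hy.1.le
    _ = 1 := mul_inv_cancel₀ hy.1.ne'

/-- key contraction `y * G y ≤ 1/2` -/
lemma mul_gauss_le (y : ℝ) (hy : y ∈ Set.Ioo (0:ℝ) 1) : y * gauss y ≤ 1/2 := by
  have hfl := floor_inv_pos y hy
  have h2 : (y⁻¹ : ℝ) < ⌊y⁻¹⌋ + 1 := Int.lt_floor_add_one _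
  have hy0 := hy.1
  -- y > 1/(⌊y⁻¹⌋+1)
  have hfl' : (0:ℝ) < (⌊y⁻¹⌋ : ℝ) + 1 := by
    have : (1:ℝ) ≤ (⌊y⁻¹⌋ : ℝ) := by exact_mod_cast hfl
    linarith
  have hygt : ((⌊y⁻¹⌋ : ℝ) + 1)⁻¹ < y := by
    rw [inv_lt_comm₀ hfl' hy0]
    exact h2
  have hmul : (⌊y⁻¹⌋ : ℝ) / ((⌊y⁻¹⌋ : ℝ) + 1) < y * ⌊y⁻¹⌋ := by
    have hflR : (1:ℝ) ≤ (⌊y⁻¹⌋ : ℝ) := by exact_mod_cast hfl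
    have := mul_lt_mul_of_pos_right hygt (by linarith : (0:ℝ) < (⌊y⁻¹⌋:ℝ))
    calc (⌊y⁻¹⌋ : ℝ) / ((⌊y⁻¹⌋ : ℝ) + 1) = ((⌊y⁻¹⌋ : ℝ) + 1)⁻¹ * ⌊y⁻¹⌋ := by
          field_simp
      _ < y * ⌊y⁻¹⌋ := this
  have hhalf : (1:ℝ)/2 ≤ (⌊y⁻¹⌋ : ℝ) / ((⌊y⁻¹⌋ : ℝ) + 1) := by
    have hflR : (1:ℝ) ≤ (⌊y⁻¹⌋ : ℝ) := by exact_mod_cast hfl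
    rw [div_le_div_iff₀ (by norm_num) hfl']
    linarith
  have : y * gauss y = 1 - y * ⌊y⁻¹⌋ := by
    unfold gauss
    rw [Int.fract]
    field_simp
  rw [this]
  linarith

lemma beta_succ (x : ℝ) (j : ℕ) : beta x (j+1) = beta x j * gauss^[j+1] x := by
  unfold beta
  rw [Finset.prod_range_succ]

lemma beta_pos (x : ℝ) (hx : x ∈ Set.Ioo (0:ℝ) 1) (hirr : Irrational x) (j : ℕ) :
    0 < beta x j := by
  unfold beta
  exact Finset.prod_pos fun i _ => (iter_mem x hx hirr i).1.1

lemma beta_le_one (x : ℝ) (hx : x ∈ Set.Ioo (0:ℝ) 1) (hirr : Irrational x) (j : ℕ) :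
    beta x j ≤ 1 := by
  unfold beta
  apply Finset.prod_le_one
  · exact fun i _ => (iter_mem x hx hirr i).1.1.le
  · exact fun i _ => (iter_mem x hx hirr i).1.2.le

lemma beta_step2 (x : ℝ) (hx : x ∈ Set.Ioo (0:ℝ) 1) (hirr : Irrational x) (j : ℕ) :
    beta x (j+2) ≤ beta x j / 2 := by
  have h1 : beta x (j+2) = beta x j * (gauss^[j+1] x * gauss^[j+2] x) := by
    rw [beta_succ, beta_succ]; ring
  have h2 : gauss^[j+2] x = gauss (gauss^[j+1] x) := by
    rw [Function.iterate_succ_apply']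
  have h3 := mul_gauss_le (gauss^[j+1] x) (iter_mem x hx hirr (j+1)).1
  have hb := beta_pos x hx hirr j
  rw [h1, h2]
  calc beta x j * (gauss^[j+1] x * gauss (gauss^[j+1] x)) ≤ beta x j * (1/2) :=
        mul_le_mul_of_nonneg_left h3 hb.le
    _ = beta x j / 2 := by ring

lemma beta_bound (x : ℝ) (hx : x ∈ Set.Ioo (0:ℝ) 1) (hirr : Irrational x) :
    ∀ j : ℕ, beta x j ≤ (1/2 : ℝ) ^ (j/2) := by
  intro j
  induction j using Nat.strong_induction_on with
  | _ j ih =>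
    match j with
    | 0 => simpa using beta_le_one x hx hirr 0
    | 1 => simpa using beta_le_one x hx hirr 1
    | (j+2) =>
      have h1 := beta_step2 x hx hirr j
      have h2 := ih j (by omega)
      have : (j+2)/2 = j/2 + 1 := by omega
      rw [this, pow_succ]
      calc beta x (j+2) ≤ beta x j / 2 := h1
        _ ≤ (1/2:ℝ)^(j/2) / 2 := by linarith
        _ = (1/2:ℝ)^(j/2) * (1/2) := by ring

lemma summable_half_halfpow : Summable (fun j : ℕ => ((1:ℝ)/2) ^ (j/2)) := by
  have hr : (0:ℝ) < (Real.sqrt 2)⁻¹ := by positivity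
  have hr1 : (Real.sqrt 2)⁻¹ < 1 := by
    rw [inv_lt_one_iff₀]
    right
    nlinarith [Real.sq_sqrt (by norm_num : (2:ℝ) ≥ 0), Real.sqrt_nonneg 2]
  have hsq : ((Real.sqrt 2)⁻¹) ^ 2 = 1/2 := by
    rw [inv_pow, Real.sq_sqrt (by norm_num : (0:ℝ) ≤ 2)]; norm_num
  have hgeo : Summable (fun j : ℕ => Real.sqrt 2 * ((Real.sqrt 2)⁻¹) ^ j) :=
    (summable_geometric_of_lt_one hr.le hr1).mul_left _
  apply Summable.of_nonneg_of_le (fun j => by positivity) _ hgeo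
  intro j
  have key : ((1:ℝ)/2) ^ (j/2) = ((Real.sqrt 2)⁻¹) ^ (2 * (j/2)) := by
    rw [pow_mul, hsq]
  rw [key]
  have h1 : ((Real.sqrt 2)⁻¹) ^ (2 * (j/2)) ≤ ((Real.sqrt 2)⁻¹) ^ (j - 1) :=
    pow_le_pow_of_le_one hr.le hr1.le (by omega)
  refine h1.trans ?_
  have hsqrt1 : (1:ℝ) ≤ Real.sqrt 2 := by
    nlinarith [Real.sq_sqrt (by norm_num : (0:ℝ) ≤ 2), Real.sqrt_nonneg 2]
  match j with
  | 0 => simpa using hsqrt1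
  | (j+1) =>
    simp only [Nat.add_sub_cancel]
    rw [pow_succ]
    have : ((Real.sqrt 2)⁻¹:ℝ) ^ j ≥ 0 := by positivity
    nlinarith [pow_nonneg hr.le j, mul_inv_cancel₀ (by positivity : Real.sqrt 2 ≠ 0)]

/-- For every irrational `x ∈ (0,1)`, the series `∑_{j≥1} β_{j-1}(x)·a_j(x)` converges. -/
theorem stmt0 (x : ℝ) (hx : x ∈ Set.Ioo (0:ℝ) 1) (hirr : Irrational x) :
    Summable (fun j : ℕ => beta x j * (pa x (j+1) : ℝ)) := by
  have hiter := iter_mem x hx hirr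
  -- pa x (j+1) = ⌊(gauss^[j] x)⁻¹⌋
  have hpa : ∀ j : ℕ, (pa x (j+1) : ℝ) = (⌊(gauss^[j] x)⁻¹⌋ : ℝ) := by
    intro j; simp [pa]
  have hterm_nonneg : ∀ j : ℕ, 0 ≤ beta x j * (pa x (j+1) : ℝ) := by
    intro j
    apply mul_nonneg (beta_pos x hx hirr j).le
    rw [hpa]
    have h := floor_inv_pos _ (hiter j).1
    have h2 : (0:ℤ) ≤ ⌊(gauss^[j] x)⁻¹⌋ := le_trans zero_le_one h
    exact_mod_cast h2
  -- bound: term j ≤ 2 * (1/2)^(j/2)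
  have hbound : ∀ j : ℕ, beta x j * (pa x (j+1) : ℝ) ≤ 2 * ((1:ℝ)/2) ^ (j/2) := by
    intro j
    have hb := beta_bound x hx hirr
    match j with
    | 0 =>
      simp only [Nat.zero_div, pow_zero, mul_one]
      have : beta x 0 = x := by simp [beta]
      rw [this, hpa]
      have := mul_floor_le x hx
      calc x * (⌊x⁻¹⌋:ℝ) ≤ 1 := by simpa using this
        _ ≤ 2 := by norm_num
    | (j+1) =>
      have h1 : beta x (j+1) = beta x j * gauss^[j+1] x := beta_succ x j
      rw [h1, hpa, mul_assoc]
      have h2 : gauss^[j+1] x * (⌊(gauss^[j+1] x)⁻¹⌋ : ℝ) ≤ 1 :=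
        mul_floor_le _ (hiter (j+1)).1
      have hbp := beta_pos x hx hirr j
      calc beta x j * (gauss^[j+1] x * (⌊(gauss^[j+1] x)⁻¹⌋ : ℝ))
          ≤ beta x j * 1 := mul_le_mul_of_nonneg_left h2 hbp.le
        _ = beta x j := mul_one _
        _ ≤ ((1:ℝ)/2) ^ (j/2) := hb j
        _ ≤ 2 * ((1:ℝ)/2) ^ ((j+1)/2) := by
            have h3 : (j+1)/2 ≤ j/2 + 1 := by omega
            have h4 : ((1:ℝ)/2) ^ (j/2 + 1) ≤ ((1:ℝ)/2) ^ ((j+1)/2) :=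
              pow_le_pow_of_le_one (by norm_num) (by norm_num) h3
            have : ((1:ℝ)/2) ^ (j/2) = 2 * ((1:ℝ)/2) ^ (j/2 + 1) := by
              rw [pow_succ]; ring
            rw [this]
            linarith
  exact Summable.of_nonneg_of_le hterm_nonneg hbound (summable_half_halfpow.mul_left 2)
end

section
/- There exists an irrational x ∈ (0,1) such that lim_{j→∞} (log q_{j+1}(x))/q_j(x) = 0 but ∑_{j≥1} (log q_{j+1}(x))/q_j(x) = ∞ (i.e., the convergence criterion for the unstable manifold is strictly weaker than the Brjuno condition). -/
open Filter Topology Finset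

namespace Stmt17

noncomputable def QP : ℕ → ℕ × ℕ
  | 0 => (0, 1)
  | n+1 => ((QP n).2, ⌈Real.exp ((QP n).2 / (n+1 : ℝ))⌉₊ * (QP n).2 + (QP n).1)

noncomputable def Q (n : ℕ) : ℕ := (QP n).2
noncomputable def b (n : ℕ) : ℕ := ⌈Real.exp (Q n / (n+1 : ℝ))⌉₊

lemma Q_zero : Q 0 = 1 := rfl

lemma QP_fst (n : ℕ) : (QP (n+1)).1 = Q n := rfl

lemma Q_succ (n : ℕ) : Q (n+1) = b n * Q n + (QP n).1 := rfl

lemma Q_two_step (n : ℕ) : Q (n+2) = b (n+1) * Q (n+1) + Q n := rfl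

lemma b_pos (n : ℕ) : 0 < b n := Nat.ceil_pos.mpr (Real.exp_pos _)

lemma Q_pos (n : ℕ) : 0 < Q n := by
  induction n with
  | zero => norm_num [Q_zero]
  | succ k ih =>
      rw [Q_succ]
      have := b_pos k
      positivity

lemma b_ge_two (n : ℕ) : 2 ≤ b n := by
  have h1 : (1:ℝ) < Real.exp (Q n / (n+1 : ℝ)) := by
    rw [Real.one_lt_exp_iff]
    have := Q_pos n
    positivity
  exact Nat.lt_ceil.mpr (by exact_mod_cast h1)

lemma Q_ge (n : ℕ) : 2^n ≤ Q n := by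
  induction n with
  | zero => simp [Q_zero]
  | succ k ih =>
      rw [Q_succ, pow_succ]
      calc 2^k * 2 ≤ Q k * b k := Nat.mul_le_mul ih (b_ge_two k)
        _ ≤ b k * Q k + (QP k).1 := by rw [Nat.mul_comm]; omega

lemma QP_fst_le (n : ℕ) : (QP n).1 ≤ (QP n).2 := by
  cases n with
  | zero => norm_num [QP]
  | succ k =>
      rw [QP_fst]
      show Q k ≤ Q (k+1)
      rw [Q_succ]
      have h1 := b_pos k
      have h2 := Q_pos k
      nlinarith

/-- finite continued fraction tails: `conv j n` is the depth-`n` approximant of the tail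
starting with partial quotient `b j`. -/
noncomputable def conv : ℕ → ℕ → ℝ
  | _, 0 => 0
  | j, n+1 => ((b j : ℝ) + conv (j+1) n)⁻¹

lemma conv_mem : ∀ n j, conv j n ∈ Set.Icc (0:ℝ) (1/2) := by
  intro n
  induction n with
  | zero => intro j; simp [conv]
  | succ k ih =>
      intro j
      have h := ih (j+1)
      have hb : (2:ℝ) ≤ (b j : ℝ) := by exact_mod_cast b_ge_two j
      have hden : (2:ℝ) ≤ (b j : ℝ) + conv (j+1) k := by
        have := h.1; linarith
      constructor
      · show (0:ℝ) ≤ ((b j : ℝ) + conv (j+1) k)⁻¹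
        positivity
      · show ((b j : ℝ) + conv (j+1) k)⁻¹ ≤ 1/2
        rw [show (1/2:ℝ) = 2⁻¹ by norm_num]
        exact inv_anti₀ (by norm_num) hden

lemma conv_contr : ∀ n j m k, |conv j (n+m) - conv j (n+k)| ≤ (1/4:ℝ)^n := by
  intro n
  induction n with
  | zero =>
      intro j m k
      have h1 := conv_mem m j
      have h2 := conv_mem k j
      simp only [Nat.zero_add, pow_zero]
      rw [abs_sub_le_iff]
      constructor <;> linarith [h1.1, h1.2, h2.1, h2.2]
  | succ n ih =>
      intro j m k
      have e1 : n + 1 + m = (n + m) + 1 := by omega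
      have e2 : n + 1 + k = (n + k) + 1 := by omega
      rw [e1, e2]
      show |((b j : ℝ) + conv (j+1) (n+m))⁻¹ - ((b j : ℝ) + conv (j+1) (n+k))⁻¹| ≤ _
      have hb : (2:ℝ) ≤ (b j : ℝ) := by exact_mod_cast b_ge_two j
      have hm := conv_mem (n+m) (j+1)
      have hk := conv_mem (n+k) (j+1)
      set s := conv (j+1) (n+m) with hs
      set t := conv (j+1) (n+k) with ht
      have has : (2:ℝ) ≤ (b j : ℝ) + s := by linarith [hm.1]
      have hat : (2:ℝ) ≤ (b j : ℝ) + t := by linarith [hk.1]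
      have hne1 : ((b j : ℝ) + s) ≠ 0 := by linarith
      have hne2 : ((b j : ℝ) + t) ≠ 0 := by linarith
      rw [inv_sub_inv hne1 hne2]
      have hprod : (4:ℝ) ≤ ((b j : ℝ) + s) * ((b j : ℝ) + t) := by nlinarith
      have hnum : |((b j : ℝ) + t) - ((b j : ℝ) + s)| ≤ (1/4:ℝ)^n := by
        have h := ih (j+1) k m
        have e : ((b j : ℝ) + t) - ((b j : ℝ) + s) = conv (j+1) (n+k) - conv (j+1) (n+m) := by
          rw [hs, ht]; ring
        rw [e]; exact h
      rw [abs_div]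
      have habs : |((b j : ℝ) + s) * ((b j : ℝ) + t)| = ((b j : ℝ) + s) * ((b j : ℝ) + t) := by
        rw [abs_of_pos]; nlinarith
      rw [habs]
      rw [div_le_iff₀ (by nlinarith)]
      calc |(b j : ℝ) + t - ((b j : ℝ) + s)| ≤ (1/4:ℝ)^n := hnum
        _ = (1/4:ℝ)^(n+1) * 4 := by ring
        _ ≤ (1/4:ℝ)^(n+1) * (((b j : ℝ) + s) * ((b j : ℝ) + t)) := by
            apply mul_le_mul_of_nonneg_left hprod (by positivity)

lemma conv_cauchy (j : ℕ) : CauchySeq (conv j) := by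
  apply cauchySeq_of_le_geometric (1/4) 1 (by norm_num)
  intro n
  rw [Real.dist_eq, one_mul]
  have := conv_contr n j 0 1
  simpa using this

noncomputable def X (j : ℕ) : ℝ := (cauchySeq_tendsto_of_complete (conv_cauchy j)).choose

lemma X_tendsto (j : ℕ) : Tendsto (conv j) atTop (𝓝 (X j)) :=
  (cauchySeq_tendsto_of_complete (conv_cauchy j)).choose_spec

lemma X_mem (j : ℕ) : X j ∈ Set.Icc (0:ℝ) (1/2) := by
  constructor
  · exact ge_of_tendsto (X_tendsto j) (Eventually.of_forall fun n => (conv_mem n j).1)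
  · exact le_of_tendsto (X_tendsto j) (Eventually.of_forall fun n => (conv_mem n j).2)

lemma X_eq (j : ℕ) : X j = ((b j : ℝ) + X (j+1))⁻¹ := by
  have hb : (2:ℝ) ≤ (b j : ℝ) := by exact_mod_cast b_ge_two j
  have hne : (b j : ℝ) + X (j+1) ≠ 0 := by
    have := (X_mem (j+1)).1; intro h; linarith [h ▸ (by linarith : (2:ℝ) ≤ (b j : ℝ) + X (j+1))]
  have h1 : Tendsto (fun n => conv j (n+1)) atTop (𝓝 (X j)) :=
    (X_tendsto j).comp (tendsto_add_atTop_nat 1)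
  have h2 : Tendsto (fun n => ((b j : ℝ) + conv (j+1) n)⁻¹) atTop
      (𝓝 (((b j : ℝ) + X (j+1))⁻¹)) :=
    (Tendsto.const_add _ (X_tendsto (j+1))).inv₀ hne
  exact tendsto_nhds_unique h1 h2

lemma X_pos (j : ℕ) : 0 < X j := by
  rw [X_eq]
  have hb : (2:ℝ) ≤ (b j : ℝ) := by exact_mod_cast b_ge_two j
  have := (X_mem (j+1)).1
  positivity

lemma X_inv (j : ℕ) : (X j)⁻¹ = (b j : ℝ) + X (j+1) := by
  rw [X_eq, inv_inv]

lemma gauss_X (j : ℕ) : gauss (X j) = X (j+1) := by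
  unfold gauss
  rw [X_inv]
  have : ((b j : ℝ)) = ((b j : ℤ) : ℝ) := by push_cast; ring
  rw [this, Int.fract_intCast_add, Int.fract_eq_self.mpr ⟨le_of_lt (X_pos (j+1)),
    lt_of_le_of_lt (X_mem (j+1)).2 (by norm_num)⟩]

lemma iter_gauss (j : ℕ) : gauss^[j] (X 0) = X j := by
  induction j with
  | zero => rfl
  | succ k ih => rw [Function.iterate_succ_apply', ih, gauss_X]

lemma floor_X_inv (j : ℕ) : ⌊(X j)⁻¹⌋ = (b j : ℤ) := by
  rw [X_inv]
  have : ((b j : ℝ)) = ((b j : ℤ) : ℝ) := by push_cast; ring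
  rw [this, Int.floor_intCast_add]
  have h0 : ⌊X (j+1)⌋ = 0 := Int.floor_eq_zero_iff.mpr
    ⟨le_of_lt (X_pos (j+1)), lt_of_le_of_lt (X_mem (j+1)).2 (by norm_num)⟩
  rw [h0, add_zero]

lemma pa_eq (j : ℕ) : pa (X 0) (j+1) = (b j : ℤ) := by
  unfold pa
  simp only [Nat.add_sub_cancel]
  rw [iter_gauss, floor_X_inv]

lemma q_eq : ∀ n, q (X 0) n = (Q n : ℤ) ∧ q (X 0) (n+1) = (Q (n+1) : ℤ) := by
  intro n
  induction n with
  | zero =>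
      refine ⟨rfl, ?_⟩
      show pa (X 0) 1 = (Q 1 : ℤ)
      have : Q 1 = b 0 := by rw [Q_succ]; simp [QP, Q_zero]
      rw [this, pa_eq 0]
  | succ k ih =>
      refine ⟨ih.2, ?_⟩
      show pa (X 0) (k+2) * q (X 0) (k+1) + q (X 0) k = _
      rw [pa_eq (k+1), ih.1, ih.2, Q_two_step]
      push_cast
      ring


/-! ### Rational descent / irrationality -/

lemma rat_num_lt_den (y : ℚ) (h1 : y < 1) : y.num < (y.den : ℤ) := by
  have hd : (0:ℚ) < (y.den : ℚ) := by exact_mod_cast y.pos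
  have := h1
  rw [← Rat.num_div_den y, div_lt_one hd] at this
  exact_mod_cast this

lemma fract_den_lt (y : ℚ) (h0 : 0 < y) (h1 : y < 1) : (Int.fract y⁻¹).den < y.den := by
  have hnum : 0 < y.num := Rat.num_pos.mpr h0
  have hlt : y.num < (y.den : ℤ) := rat_num_lt_den y h1
  have hinv : y⁻¹ = ((y.den : ℤ) : ℚ) / ((y.num : ℤ) : ℚ) := by
    conv_lhs => rw [← Rat.num_div_den y]
    rw [inv_div]
    push_cast
    ring_nf
  have hfr : Int.fract y⁻¹ = Rat.divInt ((y.den : ℤ) - ⌊y⁻¹⌋ * y.num) y.num := by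
    rw [Rat.divInt_eq_div, Int.fract, hinv]
    have hy : ((y.num : ℤ) : ℚ) ≠ 0 := by exact_mod_cast hnum.ne'
    field_simp
    push_cast
    ring
  have hdvd : ((Int.fract y⁻¹).den : ℤ) ∣ y.num := by rw [hfr]; exact Rat.den_dvd _ _
  have hle : ((Int.fract y⁻¹).den : ℤ) ≤ y.num := Int.le_of_dvd hnum hdvd
  omega

lemma rat_gauss (y : ℚ) : gauss (y : ℝ) = ((Int.fract y⁻¹ : ℚ) : ℝ) := by
  unfold gauss
  rw [show ((y:ℝ))⁻¹ = ((y⁻¹ : ℚ) : ℝ) by push_cast; ring]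
  rw [Int.fract, Int.fract, Rat.floor_cast]
  push_cast
  ring

lemma terminates : ∀ n : ℕ, ∀ y : ℚ, y.den ≤ n → 0 < y → y < 1 →
    ∃ k, gauss^[k] (y : ℝ) = 0 := by
  intro n
  induction n with
  | zero => intro y hden _ _; exact absurd (le_trans y.pos hden) (by norm_num)
  | succ m ih =>
      intro y hden h0 h1
      set z : ℚ := Int.fract y⁻¹ with hz
      have hzn : 0 ≤ z := Int.fract_nonneg _
      have hz1 : z < 1 := Int.fract_lt_one _
      have hg : gauss (y : ℝ) = (z : ℝ) := rat_gauss y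
      rcases eq_or_lt_of_le hzn with h | h
      · exact ⟨1, by simp [Function.iterate_one, hg, ← h]⟩
      · have hzden : z.den ≤ m := by
          have hlt : z.den < y.den := hz ▸ fract_den_lt y h0 h1
          omega
        obtain ⟨k, hk⟩ := ih z hzden h hz1
        exact ⟨k + 1, by rw [Function.iterate_succ_apply, hg, hk]⟩

lemma X0_irrational : Irrational (X 0) := by
  rintro ⟨r, hr⟩
  have h0 : (0:ℝ) < (r:ℝ) := hr ▸ X_pos 0
  have h1 : (r:ℝ) < 1 := hr ▸ lt_of_le_of_lt (X_mem 0).2 (by norm_num)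
  obtain ⟨k, hk⟩ := terminates r.den r le_rfl (by exact_mod_cast h0) (by exact_mod_cast h1)
  rw [hr] at hk
  rw [iter_gauss] at hk
  exact (X_pos k).ne' hk

/-! ### quantitative estimates -/

noncomputable def L (n : ℕ) : ℝ := Real.log (Q (n+1)) / (Q n : ℝ)

lemma Qr_pos (n : ℕ) : (0:ℝ) < (Q n : ℝ) := by exact_mod_cast Q_pos n

lemma Qr_one_le (n : ℕ) : (1:ℝ) ≤ (Q n : ℝ) := by exact_mod_cast Q_pos n

lemma log_lower (n : ℕ) : (Q n : ℝ)/(n+1) ≤ Real.log (Q (n+1)) := by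
  have h : Real.exp ((Q n : ℝ)/(n+1)) ≤ (Q (n+1) : ℝ) := by
    calc Real.exp ((Q n : ℝ)/(n+1)) ≤ (b n : ℝ) := Nat.le_ceil _
      _ ≤ ((b n * Q n : ℕ) : ℝ) := by
          push_cast
          nlinarith [Qr_one_le n, (by exact_mod_cast b_pos n : (0:ℝ) < (b n : ℝ))]
      _ ≤ (Q (n+1) : ℝ) := by
          have : b n * Q n ≤ Q (n+1) := by rw [Q_succ]; omega
          exact_mod_cast this
  exact (Real.le_log_iff_exp_le (Qr_pos (n+1))).mpr h

lemma L_lower (n : ℕ) : 1/((n:ℝ)+1) ≤ L n := by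
  have h := log_lower n
  have hq := Qr_pos n
  have : ((Q n : ℝ)/(n+1))/(Q n : ℝ) ≤ L n := by
    unfold L; gcongr
  calc 1/((n:ℝ)+1) = ((Q n : ℝ)/(n+1))/(Q n : ℝ) := by field_simp
    _ ≤ L n := this

lemma log_upper (n : ℕ) :
    Real.log (Q (n+1)) ≤ (Q n : ℝ)/(n+1) + Real.log 3 + Real.log (Q n) := by
  have harg : (0:ℝ) ≤ (Q n : ℝ)/(n+1) := by positivity
  have hexp1 : (1:ℝ) ≤ Real.exp ((Q n : ℝ)/(n+1)) := Real.one_le_exp harg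
  have hb : (b n : ℝ) ≤ Real.exp ((Q n : ℝ)/(n+1)) + 1 :=
    le_of_lt (Nat.ceil_lt_add_one (le_of_lt (Real.exp_pos _)))
  have hQ : (Q (n+1) : ℝ) ≤ 3 * Real.exp ((Q n : ℝ)/(n+1)) * (Q n : ℝ) := by
    have h1 : Q (n+1) ≤ b n * Q n + Q n := by
      rw [Q_succ]
      have := QP_fst_le n
      have : (QP n).1 ≤ Q n := this
      omega
    have h2 : (Q (n+1) : ℝ) ≤ ((b n : ℝ) + 1) * (Q n : ℝ) := by
      have := h1
      have hcast : ((Q (n+1) : ℕ) : ℝ) ≤ ((b n * Q n + Q n : ℕ) : ℝ) := by exact_mod_cast this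
      calc (Q (n+1) : ℝ) ≤ ((b n * Q n + Q n : ℕ) : ℝ) := hcast
        _ = ((b n : ℝ) + 1) * (Q n : ℝ) := by push_cast; ring
    calc (Q (n+1) : ℝ) ≤ ((b n : ℝ) + 1) * (Q n : ℝ) := h2
      _ ≤ (Real.exp ((Q n : ℝ)/(n+1)) + 2) * (Q n : ℝ) := by
          have := Qr_pos n; nlinarith
      _ ≤ 3 * Real.exp ((Q n : ℝ)/(n+1)) * (Q n : ℝ) := by
          have := Qr_pos n; nlinarith
  have hlog := Real.log_le_log (Qr_pos (n+1)) hQ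
  have hexpo : Real.log (3 * Real.exp ((Q n : ℝ)/(n+1)) * (Q n : ℝ))
      = Real.log 3 + (Q n : ℝ)/(n+1) + Real.log (Q n) := by
    rw [Real.log_mul (by positivity) (Qr_pos n).ne', Real.log_mul (by norm_num)
      (Real.exp_pos _).ne', Real.log_exp]
  rw [hexpo] at hlog
  linarith

lemma L_nonneg (n : ℕ) : 0 ≤ L n := by
  unfold L
  have h := Real.log_nonneg (Qr_one_le (n+1))
  have := Qr_pos n
  positivity

lemma L_upper (n : ℕ) : L n ≤ 1/((n:ℝ)+1) + (Real.log 3 + Real.log (Q n))/(Q n : ℝ) := by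
  have h := log_upper n
  have hq := Qr_pos n
  have h2 : L n ≤ ((Q n : ℝ)/(n+1) + Real.log 3 + Real.log (Q n))/(Q n : ℝ) := by
    unfold L; gcongr
  calc L n ≤ ((Q n : ℝ)/(n+1) + Real.log 3 + Real.log (Q n))/(Q n : ℝ) := h2
    _ = 1/((n:ℝ)+1) + (Real.log 3 + Real.log (Q n))/(Q n : ℝ) := by field_simp; ring

lemma Q_tendsto : Tendsto (fun n => (Q n : ℝ)) atTop atTop := by
  apply tendsto_atTop_mono (fun n => ?_) tendsto_natCast_atTop_atTop
  have h : n ≤ Q n := le_trans (le_of_lt (@Nat.lt_two_pow_self n)) (Q_ge n)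
  exact_mod_cast h

lemma L_tendsto : Tendsto L atTop (𝓝 0) := by
  apply squeeze_zero L_nonneg L_upper
  have t1 : Tendsto (fun n : ℕ => 1/((n:ℝ)+1)) atTop (𝓝 0) :=
    tendsto_one_div_add_atTop_nhds_zero_nat
  have t2 : Tendsto (fun n : ℕ => Real.log 3 / (Q n : ℝ)) atTop (𝓝 0) :=
    Tendsto.div_atTop tendsto_const_nhds Q_tendsto
  have t3 : Tendsto (fun n : ℕ => Real.log (Q n) / (Q n : ℝ)) atTop (𝓝 0) := by
    have := Real.isLittleO_log_id_atTop.tendsto_div_nhds_zero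
    exact this.comp Q_tendsto
  have := t1.add (t2.add t3)
  simp only [add_zero] at this
  convert this using 2 with n
  rw [add_div]

lemma not_summable_L : ¬ Summable (fun j : ℕ => L (j+1)) := by
  intro h
  have h2 : Summable (fun j : ℕ => (((j+2 : ℕ)):ℝ)⁻¹) := by
    apply Summable.of_nonneg_of_le (fun j => by positivity) (fun j => ?_) h
    have h4 := L_lower (j+1)
    rw [one_div] at h4
    push_cast at h4 ⊢
    calc ((j:ℝ)+2)⁻¹ = ((j:ℝ)+1+1)⁻¹ := by ring_nf
      _ ≤ L (j+1) := h4
  have h3 : Summable (fun j : ℕ => ((j:ℕ):ℝ)⁻¹) := (summable_nat_add_iff 2).mp h2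
  exact Real.not_summable_natCast_inv h3

end Stmt17


/-- There is an irrational `x ∈ (0,1)` with `log q_{j+1}/q_j → 0` which is not a Brjuno number. -/
theorem stmt17 :
    ∃ x : ℝ, x ∈ Set.Ioo (0:ℝ) 1 ∧ Irrational x ∧
      Tendsto (fun j : ℕ => Real.log (q x (j+1)) / (q x j : ℝ)) atTop (nhds 0) ∧
      ¬ Summable (fun j : ℕ => Real.log (q x (j+2)) / (q x (j+1) : ℝ)) := by
  refine ⟨Stmt17.X 0, ⟨Stmt17.X_pos 0, lt_of_le_of_lt (Stmt17.X_mem 0).2 (by norm_num)⟩,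
    Stmt17.X0_irrational, ?_, ?_⟩
  · have he : (fun j : ℕ => Real.log (q (Stmt17.X 0) (j+1)) / (q (Stmt17.X 0) j : ℝ)) = Stmt17.L := by
      funext j
      rw [(Stmt17.q_eq j).1, (Stmt17.q_eq j).2]
      unfold Stmt17.L
      push_cast
      ring
    rw [he]
    exact Stmt17.L_tendsto
  · have he : (fun j : ℕ => Real.log (q (Stmt17.X 0) (j+2)) / (q (Stmt17.X 0) (j+1) : ℝ))
        = (fun j : ℕ => Stmt17.L (j+1)) := by
      funext j
      rw [(Stmt17.q_eq (j+1)).1, (Stmt17.q_eq (j+1)).2]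
      unfold Stmt17.L
      push_cast
      ring
    rw [he]
    exact Stmt17.not_summable_L
end
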